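/- (Diaconis–Shahshahani upper bound lemma for finite abelian groups) Let A be a finite abelian group, P a probability distribution on A, and U the uniform distribution on A. Then ‖P − U‖_TV² ≤ (1/4) Σ_{χ ≠ χ₀} |P̂(χ)|², where the sum is over nontrivial characters χ of A, P̂(χ) = Σ_{g∈A} χ(g) P(g), and ‖P − U‖_TV = (1/2) Σ_{g∈A} |P(g) − U(g)|. -/

import Mathlib

open scoped Classical

open Complex in
private lemma ds_parseval {A : Type*} [AddCommGroup A] [Fintype A] (f : A → ℝ) :
    ∑ χ : AddChar A ℂ, ‖∑ g, χ g * f g‖ ^ 2 =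
      (Fintype.card A : ℝ) * ∑ g, f g ^ 2 := by
  classical
  have hkey : ∑ χ : AddChar A ℂ, (∑ g, χ g * (f g : ℂ)) *
      (starRingEnd ℂ) (∑ g, χ g * (f g : ℂ)) = (Fintype.card A : ℂ) * ∑ g, (f g : ℂ) ^ 2 := by
    have h1 : ∀ χ : AddChar A ℂ, (∑ g, χ g * (f g : ℂ)) *
        (starRingEnd ℂ) (∑ g, χ g * (f g : ℂ)) =
        ∑ p : A × A, χ (p.1 - p.2) * ((f p.1 : ℂ) * f p.2) := by
      intro χ
      rw [map_sum, Finset.sum_mul_sum, Fintype.sum_prod_type]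
      refine Finset.sum_congr rfl fun g _ => Finset.sum_congr rfl fun h _ => ?_
      show χ g * (f g : ℂ) * (starRingEnd ℂ) (χ h * (f h : ℂ)) =
        χ (g - h) * ((f g : ℂ) * (f h : ℂ))
      rw [map_mul, Complex.conj_ofReal, (AddChar.map_neg_eq_conj χ h).symm,
        sub_eq_add_neg, AddChar.map_add_eq_mul]
      ring
    calc ∑ χ : AddChar A ℂ, (∑ g, χ g * (f g : ℂ)) *
          (starRingEnd ℂ) (∑ g, χ g * (f g : ℂ))
        = ∑ χ : AddChar A ℂ, ∑ p : A × A, χ (p.1 - p.2) * ((f p.1 : ℂ) * f p.2) :=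
          Finset.sum_congr rfl fun χ _ => h1 χ
      _ = ∑ p : A × A, ∑ χ : AddChar A ℂ, χ (p.1 - p.2) * ((f p.1 : ℂ) * f p.2) :=
          Finset.sum_comm
      _ = ∑ p : A × A,
            (if p.1 - p.2 = 0 then (Fintype.card A : ℂ) else 0) * ((f p.1 : ℂ) * f p.2) := by
          refine Finset.sum_congr rfl fun p _ => ?_
          rw [← Finset.sum_mul, AddChar.sum_apply_eq_ite]
      _ = (Fintype.card A : ℂ) * ∑ g, (f g : ℂ) ^ 2 := by
          rw [Fintype.sum_prod_type, Finset.mul_sum]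
          refine Finset.sum_congr rfl fun g _ => ?_
          rw [Finset.sum_eq_single g (fun h _ hne => by
            simp [sub_ne_zero.2 hne.symm]) (by simp)]
          simp [sq]
  have : ∑ χ : AddChar A ℂ, ‖∑ g, χ g * (f g : ℂ)‖ ^ 2 =
      ∑ χ : AddChar A ℂ, ((∑ g, χ g * (f g : ℂ)) *
        (starRingEnd ℂ) (∑ g, χ g * (f g : ℂ))).re := by
    refine Finset.sum_congr rfl fun χ _ => ?_
    rw [Complex.mul_conj, Complex.sq_norm]
    simp
  rw [this, ← Complex.re_sum, hkey]
  have : (Fintype.card A : ℂ) * ∑ g, (f g : ℂ) ^ 2 =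
      (((Fintype.card A : ℝ) * ∑ g, f g ^ 2 : ℝ) : ℂ) := by
    push_cast; ring
  rw [this, Complex.ofReal_re]

/-- Diaconis–Shahshahani upper bound lemma: for a probability distribution `P`
on a finite abelian group `A` with uniform distribution `U`,
`‖P − U‖_TV² ≤ (1/4) Σ_{χ ≠ χ₀} |P̂(χ)|²`, the sum over nontrivial characters. -/
theorem diaconis_shahshahani {A : Type*} [AddCommGroup A] [Fintype A]
    (P : A → ℝ) (hP : ∀ g, 0 ≤ P g) (hPsum : ∑ g, P g = 1) :
    ((1 : ℝ) / 2 * ∑ g, |P g - 1 / Fintype.card A|) ^ 2 ≤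
      (1 : ℝ) / 4 * ∑ χ : AddChar A ℂ,
        if χ = 1 then 0 else ‖∑ g, χ g * P g‖ ^ 2 := by
  classical
  set N := Fintype.card A with hNdef
  have hN : 0 < N := Fintype.card_pos
  set f : A → ℝ := fun g => P g - 1 / N with hf
  -- Cauchy–Schwarz
  have hCS : (∑ g, |f g|) ^ 2 ≤ (N : ℝ) * ∑ g, f g ^ 2 := by
    have := sq_sum_le_card_mul_sum_sq (s := (Finset.univ : Finset A))
      (f := fun g => |f g|)
    simpa [sq_abs, Finset.card_univ] using this
  -- f-hat of trivial character is 0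
  have hsumf : ∑ g, f g = 0 := by
    simp only [hf, Finset.sum_sub_distrib, hPsum, Finset.sum_const, Finset.card_univ,
      nsmul_eq_mul]
    field_simp
    simp [hNdef]
  have hf1 : (∑ g, ((1 : AddChar A ℂ)) g * (f g : ℂ)) = 0 := by
    simp only [AddChar.one_apply, one_mul]
    exact_mod_cast congrArg (Complex.ofReal) hsumf
  -- for nontrivial χ, P-hat = f-hat
  have hfP : ∀ χ : AddChar A ℂ, χ ≠ 1 → (∑ g, χ g * (P g : ℂ)) = ∑ g, χ g * (f g : ℂ) := by
    intro χ hχ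
    have hsum0 : ∑ g, χ g = 0 := AddChar.sum_eq_zero_iff_ne_zero.2 (by
      rwa [← AddChar.one_eq_zero])
    have : ∑ g, χ g * (f g : ℂ) = ∑ g, χ g * (P g : ℂ) - (1 / N : ℂ) * ∑ g, χ g := by
      rw [Finset.mul_sum, ← Finset.sum_sub_distrib]
      refine Finset.sum_congr rfl fun g _ => ?_
      simp only [hf]
      push_cast
      ring
    rw [this, hsum0, mul_zero, sub_zero]
  -- rewrite RHS sum
  have hRHS : ∑ χ : AddChar A ℂ, (if χ = 1 then 0 else ‖∑ g, χ g * P g‖ ^ 2)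
      = (N : ℝ) * ∑ g, f g ^ 2 := by
    rw [← ds_parseval f]
    refine Finset.sum_congr rfl fun χ _ => ?_
    split_ifs with h
    · rw [h, hf1]
      simp
    · rw [hfP χ h]
  rw [hRHS]
  have habs : ∑ g, |P g - 1 / (N : ℝ)| = ∑ g, |f g| := rfl
  calc ((1 : ℝ) / 2 * ∑ g, |P g - 1 / N|) ^ 2
      = 1 / 4 * (∑ g, |f g|) ^ 2 := by rw [habs, mul_pow]; norm_num
    _ ≤ 1 / 4 * ((N : ℝ) * ∑ g, f g ^ 2) := by linarith [hCS]
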